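/- Let (X_i^S)_{i≥1} be i.i.d. with law μ_S on ℝ^d and (X_i^T)_{i≥1} be i.i.d. with law μ_T on ℝ^d, both with compact support and independent of each other, and let (N_n) be sample sizes with n/N_n bounded. Let γ̄ ∈ ℝ^d satisfy E_S[X exp(Xᵀγ̄)] = E_T[X] with J := E_S[XXᵀ exp(Xᵀγ̄)] invertible. Suppose γ̂_n are random vectors satisfying the empirical covariate-balancing equation n⁻¹ Σ_{i≤n} X_i^S exp((X_i^S)ᵀγ̂_n) = N_n⁻¹ Σ_{i≤N_n} X_i^T almost surely, and γ̂_n → γ̄ in probability. Then √n(γ̂_n − γ̄) is bounded in probability, i.e., γ̂_n − γ̄ = O_p(n^{−1/2}). -/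

import Mathlib

open MeasureTheory ProbabilityTheory Filter Matrix
open scoped Matrix

/-- `Z n = O_p(1)`: for every `ε > 0` there is `M > 0` such that
`P(‖Z n‖ > M) < ε` for all sufficiently large `n`. -/
def BoundedInProb {Ω E : Type*} [MeasurableSpace Ω] [Norm E]
    (P : Measure Ω) (Z : ℕ → Ω → E) : Prop :=
  ∀ ε : ℝ, 0 < ε → ∃ M : ℝ, 0 < M ∧
    ∀ᶠ n in atTop, (P {ω | M < ‖Z n ω‖}).toReal < ε


lemma cheb_mean {Ω : Type} [MeasurableSpace Ω] (P : Measure Ω) [IsProbabilityMeasure P]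
    (W : ℕ → Ω → ℝ) (B : ℝ)
    (hmeas : ∀ i, Measurable (W i))
    (hbd : ∀ i, ∀ᵐ ω ∂P, |W i ω| ≤ B)
    (μm : ℝ) (hmean : ∀ i, ∫ ω, W i ω ∂P = μm)
    (hind : ∀ i j : ℕ, i ≠ j → IndepFun (W i) (W j) P)
    (n : ℕ) (hn : 0 < n) {a : ℝ} (ha : 0 < a) :
    P {ω | a ≤ |(n:ℝ)⁻¹ * ∑ i ∈ Finset.range n, W i ω - μm|}
      ≤ ENNReal.ofReal (B^2 / (n * a^2)) := by
  have hB : 0 ≤ B := le_trans (abs_nonneg _) ((hbd 0).exists.choose_spec)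
  have hW2 : ∀ i, MemLp (W i) 2 P := fun i =>
    memLp_of_bounded (by filter_upwards [hbd i] with ω h using abs_le.1 h)
      (hmeas i).aestronglyMeasurable 2
  set S : Ω → ℝ := fun ω => ∑ i ∈ Finset.range n, W i ω with hS
  set Z : Ω → ℝ := fun ω => (n:ℝ)⁻¹ * S ω with hZ
  have hSmem : MemLp S 2 P := by
    have : S = ∑ i ∈ Finset.range n, W i := by funext ω; simp [hS]
    rw [this]; exact memLp_finset_sum' _ fun i _ => hW2 i
  have hZmem : MemLp Z 2 P := by
    have : Z = (n:ℝ)⁻¹ • S := by funext ω; simp [hZ, smul_eq_mul]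
    rw [this]; exact hSmem.const_smul _
  have hEZ : ∫ ω, Z ω ∂P = μm := by
    have : ∫ ω, S ω ∂P = n * μm := by
      rw [hS]
      rw [integral_finset_sum _ (fun i _ => (hW2 i).integrable one_le_two)]
      simp [hmean, Finset.sum_const]
    simp only [hZ, integral_const_mul, this]
    field_simp
  have hVarS : variance S P ≤ n * B^2 := by
    have : S = ∑ i ∈ Finset.range n, W i := by funext ω; simp [hS]
    rw [this, IndepFun.variance_sum (fun i _ => hW2 i)
      (fun i _ j _ hij => hind i j hij)]
    calc ∑ i ∈ Finset.range n, variance (W i) P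
        ≤ ∑ i ∈ Finset.range n, B^2 := by
          refine Finset.sum_le_sum fun i _ => ?_
          refine le_trans (variance_le_expectation_sq (hW2 i).aestronglyMeasurable) ?_
          have : ∫ ω, (W i ω)^2 ∂P ≤ ∫ _, B^2 ∂P := by
            refine integral_mono_ae ((hW2 i).integrable_sq) (integrable_const _) ?_
            filter_upwards [hbd i] with ω h
            exact sq_le_sq' (neg_le_of_abs_le h) (le_of_abs_le h)
          simpa using this
      _ = n * B^2 := by simp [Finset.sum_const, mul_comm]
  have hVarZ : variance Z P ≤ B^2 / n := by
    have : Z = (n:ℝ)⁻¹ • S := by funext ω; simp [hZ, smul_eq_mul]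
    rw [this, variance_smul]
    have hn' : (0:ℝ) < n := by exact_mod_cast hn
    calc ((n:ℝ)⁻¹)^2 * variance S P ≤ ((n:ℝ)⁻¹)^2 * (n * B^2) :=
          mul_le_mul_of_nonneg_left hVarS (by positivity)
      _ = B^2 / n := by field_simp
  calc P {ω | a ≤ |(n:ℝ)⁻¹ * ∑ i ∈ Finset.range n, W i ω - μm|}
      = P {ω | a ≤ |Z ω - ∫ ω, Z ω ∂P|} := by rw [hEZ]
    _ ≤ ENNReal.ofReal (variance Z P / a^2) := meas_ge_le_variance_div_sq hZmem ha
    _ ≤ ENNReal.ofReal (B^2 / (n * a^2)) := by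
        apply ENNReal.ofReal_le_ofReal
        have hn' : (0:ℝ) < n := by exact_mod_cast hn
        calc variance Z P / a^2 ≤ (B^2 / n) / a^2 := by gcongr
          _ = B^2 / (n * a^2) := by rw [div_div]

lemma integrable_of_compact_ae {d : ℕ} (μ : Measure (Fin d → ℝ)) [IsProbabilityMeasure μ]
    (K : Set (Fin d → ℝ)) (hK : IsCompact K) (hμK : μ Kᶜ = 0)
    {E : Type*} [NormedAddCommGroup E] (f : (Fin d → ℝ) → E) (hf : Continuous f) :
    Integrable f μ := by
  obtain ⟨C, hC⟩ : ∃ C, ∀ x ∈ K, ‖f x‖ ≤ C := by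
    rcases K.eq_empty_or_nonempty with h | h
    · exact ⟨0, by simp [h]⟩
    · obtain ⟨x₀, _, hx₀⟩ := hK.exists_isMaxOn h (hf.norm.continuousOn)
      exact ⟨‖f x₀‖, fun x hx => hx₀ hx⟩
  refine Integrable.mono' (integrable_const C) hf.aestronglyMeasurable ?_
  have : ∀ᵐ x ∂μ, x ∈ K := by
    rw [ae_iff]; exact hμK
  filter_upwards [this] with x hx using hC x hx

lemma exists_min_eig {d : ℕ} (hd : 0 < d) (μS : Measure (Fin d → ℝ)) [IsProbabilityMeasure μS]
    (KS : Set (Fin d → ℝ)) (hKS : IsCompact KS) (hμSK : μS KSᶜ = 0)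
    (γbar : Fin d → ℝ) (J : Matrix (Fin d) (Fin d) ℝ)
    (hJ : J = Matrix.of (fun i j => ∫ x, x i * x j * Real.exp (x ⬝ᵥ γbar) ∂μS))
    (hJunit : IsUnit J.det) :
    ∃ lam : ℝ, 0 < lam ∧ ∀ v : Fin d → ℝ,
      lam * ‖v‖^2 ≤ ∑ k, ∑ l, v k * v l * J k l := by
  haveI : Nonempty (Fin d) := ⟨⟨0, hd⟩⟩
  set Q : (Fin d → ℝ) → ℝ := fun v => ∑ k, ∑ l, v k * v l * J k l with hQdef
  have hQcont : Continuous Q := by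
    apply continuous_finset_sum; intro k _
    apply continuous_finset_sum; intro l _
    fun_prop
  have hint : ∀ f : (Fin d → ℝ) → ℝ, Continuous f → Integrable f μS :=
    fun f hf => integrable_of_compact_ae μS KS hKS hμSK f hf
  have hcd : ∀ w : Fin d → ℝ, Continuous (fun x : Fin d → ℝ => x ⬝ᵥ w) := fun w => by
    simp only [dotProduct]; fun_prop
  have hce : Continuous (fun x : Fin d → ℝ => Real.exp (x ⬝ᵥ γbar)) :=
    Real.continuous_exp.comp (hcd γbar)
  have hckl : ∀ k l : Fin d, Continuous (fun x : Fin d → ℝ => x k * x l * Real.exp (x ⬝ᵥ γbar)) :=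
    fun k l => ((continuous_apply k).mul (continuous_apply l)).mul hce
  -- Q v as an integral
  have hQint : ∀ v : Fin d → ℝ,
      Q v = ∫ x, (x ⬝ᵥ v)^2 * Real.exp (x ⬝ᵥ γbar) ∂μS := by
    intro v
    have h1 : ∀ x : Fin d → ℝ, (x ⬝ᵥ v)^2 * Real.exp (x ⬝ᵥ γbar)
        = ∑ k, ∑ l, v k * v l * (x k * x l * Real.exp (x ⬝ᵥ γbar)) := by
      intro x
      rw [dotProduct, pow_two, Finset.sum_mul_sum, Finset.sum_mul]
      refine Finset.sum_congr rfl fun k _ => ?_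
      rw [Finset.sum_mul]
      exact Finset.sum_congr rfl fun l _ => by ring
    rw [hQdef]
    simp only [h1]
    rw [integral_finset_sum]
    · refine Finset.sum_congr rfl fun k _ => ?_
      rw [integral_finset_sum]
      · refine Finset.sum_congr rfl fun l _ => ?_
        rw [integral_const_mul, hJ]
        rfl
      · intro l _
        exact (hint _ (hckl k l)).const_mul _
    · intro k _
      apply integrable_finset_sum
      intro l _
      exact (hint _ (hckl k l)).const_mul _
  have hQpos : ∀ v : Fin d → ℝ, ‖v‖ = 1 → 0 < Q v := by
    intro v hv
    have hnn : 0 ≤ Q v := by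
      rw [hQint v]
      exact integral_nonneg fun x => by positivity
    rcases hnn.lt_or_eq with h | h
    · exact h
    exfalso
    have hzero : (fun x => (x ⬝ᵥ v)^2 * Real.exp (x ⬝ᵥ γbar)) =ᵐ[μS] 0 := by
      rw [← integral_eq_zero_iff_of_nonneg_ae (f := fun x => (x ⬝ᵥ v)^2 * Real.exp (x ⬝ᵥ γbar))
        (Filter.Eventually.of_forall fun x => by positivity)
        (hint _ (((hcd v).pow 2).mul hce))]
      rw [← hQint v]; exact h.symm
    have hdot : ∀ᵐ x ∂μS, x ⬝ᵥ v = 0 := by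
      filter_upwards [hzero] with x hx
      have he : Real.exp (x ⬝ᵥ γbar) ≠ 0 := (Real.exp_pos _).ne'
      have := mul_eq_zero.1 hx
      rcases this with h' | h'
      · exact pow_eq_zero_iff two_ne_zero |>.1 h'
      · exact absurd h' he
    have hJv : J *ᵥ v = 0 := by
      funext k
      have h2 : ∀ x : Fin d → ℝ, x k * (x ⬝ᵥ v) * Real.exp (x ⬝ᵥ γbar)
          = ∑ l, v l * (x k * x l * Real.exp (x ⬝ᵥ γbar)) := by
        intro x
        rw [dotProduct, Finset.mul_sum, Finset.sum_mul]
        exact Finset.sum_congr rfl fun l _ => by ring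
      have hL : (J *ᵥ v) k = ∑ l, v l * ∫ x, x k * x l * Real.exp (x ⬝ᵥ γbar) ∂μS := by
        rw [hJ]; simp [Matrix.mulVec, dotProduct, mul_comm]
      have this : (J *ᵥ v) k = ∫ x, x k * (x ⬝ᵥ v) * Real.exp (x ⬝ᵥ γbar) ∂μS := by
        calc (J *ᵥ v) k = ∑ l, v l * ∫ x, x k * x l * Real.exp (x ⬝ᵥ γbar) ∂μS := hL
          _ = ∑ l, ∫ x, v l * (x k * x l * Real.exp (x ⬝ᵥ γbar)) ∂μS := by
              simp [integral_const_mul]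
          _ = ∫ x, ∑ l, v l * (x k * x l * Real.exp (x ⬝ᵥ γbar)) ∂μS :=
              (integral_finset_sum _ (fun l _ => (hint _ (hckl k l)).const_mul _)).symm
          _ = ∫ x, x k * (x ⬝ᵥ v) * Real.exp (x ⬝ᵥ γbar) ∂μS := by
              congr 1; funext x; rw [h2 x]
      rw [Pi.zero_apply, this]
      rw [integral_eq_zero_iff_of_nonneg_ae]
      · filter_upwards [hdot] with x hx; simp [hx]
      · filter_upwards [hdot] with x hx; simp [hx]
      · exact hint _ (((continuous_apply k).mul (hcd v)).mul hce)
    have hv0 : v = 0 := by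
      have hinv := Matrix.nonsing_inv_mul J hJunit
      calc v = (J⁻¹ * J) *ᵥ v := by rw [hinv, Matrix.one_mulVec]
        _ = J⁻¹ *ᵥ (J *ᵥ v) := by rw [Matrix.mulVec_mulVec]
        _ = 0 := by rw [hJv, Matrix.mulVec_zero]
    rw [hv0] at hv; simp at hv
  -- min over the sphere
  have hcomp : IsCompact (Metric.sphere (0 : Fin d → ℝ) 1) := isCompact_sphere _ _
  have hne : (Metric.sphere (0 : Fin d → ℝ) 1).Nonempty := by
    refine ⟨fun _ => 1, ?_⟩
    simp [mem_sphere_iff_norm, pi_norm_const]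
  obtain ⟨v₀, hv₀mem, hv₀min⟩ := hcomp.exists_isMinOn hne hQcont.continuousOn
  have hv₀norm : ‖v₀‖ = 1 := by simpa [mem_sphere_iff_norm] using hv₀mem
  refine ⟨Q v₀, hQpos v₀ hv₀norm, fun v => ?_⟩
  rcases eq_or_ne v 0 with rfl | hv
  · simp [hQdef]
  · have hvn : (0:ℝ) < ‖v‖ := norm_pos_iff.2 hv
    set u : Fin d → ℝ := ‖v‖⁻¹ • v with hu
    have hun : ‖u‖ = 1 := by
      rw [hu, norm_smul, Real.norm_eq_abs, abs_inv, abs_of_pos hvn]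
      field_simp
    have hQu : Q u = ‖v‖⁻¹^2 * Q v := by
      rw [hQdef]
      simp only [hu, Pi.smul_apply, smul_eq_mul]
      rw [Finset.mul_sum]
      refine Finset.sum_congr rfl fun k _ => ?_
      rw [Finset.mul_sum]
      refine Finset.sum_congr rfl fun l _ => by ring
    have hmin : Q v₀ ≤ Q u := hv₀min (by simp [mem_sphere_iff_norm, hun])
    rw [hQu] at hmin
    have : Q v₀ * ‖v‖^2 ≤ ‖v‖⁻¹^2 * Q v * ‖v‖^2 :=
      mul_le_mul_of_nonneg_right hmin (by positivity)
    calc Q v₀ * ‖v‖^2 ≤ ‖v‖⁻¹^2 * Q v * ‖v‖^2 := this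
      _ = Q v := by field_simp

lemma dot_smul_sum {d : ℕ} (n : ℕ) (Δ : Fin d → ℝ) (e : ℕ → ℝ) (x : ℕ → Fin d → ℝ) :
    Δ ⬝ᵥ ((n:ℝ)⁻¹ • ∑ i ∈ Finset.range n, e i • x i)
      = (n:ℝ)⁻¹ * ∑ i ∈ Finset.range n, e i * (x i ⬝ᵥ Δ) := by
  simp only [dotProduct, Pi.smul_apply, Finset.sum_apply, smul_eq_mul,
    Finset.mul_sum]
  rw [Finset.sum_comm]
  refine Finset.sum_congr rfl fun i _ => Finset.sum_congr rfl fun k _ => by ring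

lemma mvt_bound {d : ℕ} (n : ℕ) (x : ℕ → Fin d → ℝ) (γh γb T : Fin d → ℝ)
    (heq : (n:ℝ)⁻¹ • ∑ i ∈ Finset.range n, Real.exp (x i ⬝ᵥ γh) • x i = T)
    (β : ℝ) (hβ : ∀ i ∈ Finset.range n, |x i ⬝ᵥ (γh - γb)| ≤ β) :
    Real.exp (-β) *
      ((n:ℝ)⁻¹ * ∑ i ∈ Finset.range n, Real.exp (x i ⬝ᵥ γb) * (x i ⬝ᵥ (γh - γb))^2)
    ≤ (γh - γb) ⬝ᵥ (T - (n:ℝ)⁻¹ • ∑ i ∈ Finset.range n, Real.exp (x i ⬝ᵥ γb) • x i) := by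
  set Δ : Fin d → ℝ := γh - γb with hΔ
  set a : ℕ → ℝ := fun i => x i ⬝ᵥ γb with ha
  set b : ℕ → ℝ := fun i => x i ⬝ᵥ Δ with hb
  have hab : ∀ i, x i ⬝ᵥ γh = a i + b i := by
    intro i
    simp only [ha, hb, hΔ, dotProduct_sub]
    ring
  set g : ℝ → ℝ := fun t => (n:ℝ)⁻¹ * ∑ i ∈ Finset.range n, Real.exp (a i + t * b i) * b i
    with hg
  set g' : ℝ → ℝ :=
    fun t => (n:ℝ)⁻¹ * ∑ i ∈ Finset.range n, Real.exp (a i + t * b i) * b i ^ 2 with hg'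
  have hderiv : ∀ t : ℝ, HasDerivAt g (g' t) t := by
    intro t
    have h1 : ∀ i ∈ Finset.range n,
        HasDerivAt (fun t => Real.exp (a i + t * b i) * b i)
          (Real.exp (a i + t * b i) * b i ^ 2) t := by
      intro i _
      have h0 : HasDerivAt (fun t : ℝ => a i + t * b i) (b i) t :=
        (hasDerivAt_mul_const (b i)).const_add (a i)
      have := (h0.exp).mul_const (b i)
      rw [show Real.exp (a i + t * b i) * b i ^ 2 = Real.exp (a i + t * b i) * b i * b i by ring]
      exact this
    have hsum : HasDerivAt (fun t => ∑ i ∈ Finset.range n, Real.exp (a i + t * b i) * b i)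
        (∑ i ∈ Finset.range n, Real.exp (a i + t * b i) * b i ^ 2) t :=
      HasDerivAt.fun_sum h1
    simpa [hg, hg', mul_comm] using hsum.const_mul ((n:ℝ)⁻¹)
  have hg1 : g 1 = Δ ⬝ᵥ T := by
    rw [← heq, dot_smul_sum]
    simp [hg, hab, hb]
  have hg0 : g 0 = Δ ⬝ᵥ ((n:ℝ)⁻¹ • ∑ i ∈ Finset.range n, Real.exp (x i ⬝ᵥ γb) • x i) := by
    rw [dot_smul_sum]
    simp [hg, ha, hb]
  obtain ⟨t₀, ht₀, hslope⟩ := exists_hasDerivAt_eq_slope g g' one_pos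
    (fun t _ => (hderiv t).continuousAt.continuousWithinAt)
    (fun t _ => hderiv t)
  have hslope' : g 1 - g 0 = g' t₀ := by
    rw [hslope]; ring
  have hlow : Real.exp (-β) *
      ((n:ℝ)⁻¹ * ∑ i ∈ Finset.range n, Real.exp (a i) * b i ^ 2) ≤ g' t₀ := by
    simp only [hg', Finset.mul_sum]
    refine Finset.sum_le_sum fun i hi => ?_
    have h1 : Real.exp (-β) * Real.exp (a i) ≤ Real.exp (a i + t₀ * b i) := by
      rw [← Real.exp_add]
      apply Real.exp_le_exp.2
      have : -β ≤ t₀ * b i := by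
        have h2 : |t₀ * b i| ≤ β := by
          rw [abs_mul, abs_of_pos ht₀.1]
          calc t₀ * |b i| ≤ 1 * |b i| :=
              mul_le_mul_of_nonneg_right ht₀.2.le (abs_nonneg _)
            _ = |b i| := one_mul _
            _ ≤ β := hβ i hi
        linarith [neg_abs_le (t₀ * b i), abs_le.1 h2]
      linarith
    calc Real.exp (-β) * ((n:ℝ)⁻¹ * (Real.exp (a i) * b i ^ 2))
        = (n:ℝ)⁻¹ * ((Real.exp (-β) * Real.exp (a i)) * b i ^ 2) := by ring
      _ ≤ (n:ℝ)⁻¹ * (Real.exp (a i + t₀ * b i) * b i ^ 2) := by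
          apply mul_le_mul_of_nonneg_left _ (by positivity)
          exact mul_le_mul_of_nonneg_right h1 (sq_nonneg _)
  have hdot : Δ ⬝ᵥ (T - (n:ℝ)⁻¹ • ∑ i ∈ Finset.range n, Real.exp (x i ⬝ᵥ γb) • x i)
      = g 1 - g 0 := by
    rw [dotProduct_sub, hg1, hg0]
  rw [hdot, hslope']
  exact hlow

lemma quad_expand {d : ℕ} (n : ℕ) (e : ℕ → ℝ) (x : ℕ → Fin d → ℝ) (Δ : Fin d → ℝ) :
    (n:ℝ)⁻¹ * ∑ i ∈ Finset.range n, e i * (x i ⬝ᵥ Δ)^2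
      = ∑ k, ∑ l, Δ k * Δ l * ((n:ℝ)⁻¹ * ∑ i ∈ Finset.range n, x i k * x i l * e i) := by
  have h1 : ∀ i, e i * (x i ⬝ᵥ Δ)^2 = ∑ k, ∑ l, Δ k * Δ l * (x i k * x i l * e i) := by
    intro i
    rw [dotProduct, pow_two, Finset.sum_mul_sum, Finset.mul_sum]
    refine Finset.sum_congr rfl fun k _ => ?_
    rw [Finset.mul_sum]
    exact Finset.sum_congr rfl fun l _ => by ring
  calc (n:ℝ)⁻¹ * ∑ i ∈ Finset.range n, e i * (x i ⬝ᵥ Δ)^2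
      = (n:ℝ)⁻¹ * ∑ i ∈ Finset.range n, ∑ k, ∑ l, Δ k * Δ l * (x i k * x i l * e i) := by
        rw [Finset.sum_congr rfl fun i _ => h1 i]
    _ = (n:ℝ)⁻¹ * ∑ k, ∑ i ∈ Finset.range n, ∑ l, Δ k * Δ l * (x i k * x i l * e i) := by
        rw [Finset.sum_comm]
    _ = (n:ℝ)⁻¹ * ∑ k, ∑ l, ∑ i ∈ Finset.range n, Δ k * Δ l * (x i k * x i l * e i) := by
        congr 1
        exact Finset.sum_congr rfl fun k _ => Finset.sum_comm
    _ = ∑ k, ∑ l, Δ k * Δ l * ((n:ℝ)⁻¹ * ∑ i ∈ Finset.range n, x i k * x i l * e i) := by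
        rw [Finset.mul_sum]
        refine Finset.sum_congr rfl fun k _ => ?_
        rw [Finset.mul_sum]
        refine Finset.sum_congr rfl fun l _ => ?_
        rw [← Finset.mul_sum, Finset.mul_sum, ← Finset.mul_sum]
        ring

lemma abs_dot_le {d : ℕ} (u v : Fin d → ℝ) : |u ⬝ᵥ v| ≤ d * (‖u‖ * ‖v‖) := by
  rw [dotProduct]
  refine (Finset.abs_sum_le_sum_abs _ _).trans ?_
  have h : ∀ k : Fin d, |u k * v k| ≤ ‖u‖ * ‖v‖ := fun k => by
    rw [abs_mul]
    exact mul_le_mul (norm_le_pi_norm u k) (norm_le_pi_norm v k) (abs_nonneg _)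
      (norm_nonneg _)
  calc ∑ k, |u k * v k| ≤ ∑ _k : Fin d, ‖u‖ * ‖v‖ := Finset.sum_le_sum fun k _ => h k
    _ = d * (‖u‖ * ‖v‖) := by simp [Finset.sum_const, mul_comm]
lemma pointwise_bound {d : ℕ} (hd : 0 < d) (n N : ℕ) (hn : 0 < n)
    (x y : ℕ → Fin d → ℝ) (γh γb m : Fin d → ℝ)
    (J : Matrix (Fin d) (Fin d) ℝ) (lam : ℝ) (hlam : 0 < lam)
    (hlamQ : ∀ v : Fin d → ℝ, lam * ‖v‖^2 ≤ ∑ k, ∑ l, v k * v l * J k l)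
    (R : ℝ) (hR1 : 1 ≤ R) (hxR : ∀ i, i < n → ‖x i‖ ≤ R)
    (heq : (n:ℝ)⁻¹ • ∑ i ∈ Finset.range n, Real.exp (x i ⬝ᵥ γh) • x i
      = (N:ℝ)⁻¹ • ∑ j ∈ Finset.range N, y j)
    (hδ : ‖γh - γb‖ ≤ 1)
    (hH : ∀ k l : Fin d,
      |(n:ℝ)⁻¹ * (∑ i ∈ Finset.range n, x i k * x i l * Real.exp (x i ⬝ᵥ γb)) - J k l|
        ≤ lam / (2 * d^2))
    (M₁ M₂ : ℝ)
    (hf : ∀ k, |(n:ℝ)⁻¹ * (∑ i ∈ Finset.range n, Real.exp (x i ⬝ᵥ γb) * x i k) - m k|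
      ≤ M₁ / Real.sqrt n)
    (hT : ∀ k, |(N:ℝ)⁻¹ * (∑ j ∈ Finset.range N, y j k) - m k| ≤ M₂ / Real.sqrt n) :
    Real.sqrt n * ‖γh - γb‖
      ≤ (d * (M₁ + M₂)) / (Real.exp (-(d * R)) * (lam / 2)) := by
  have hsq : (0:ℝ) < Real.sqrt n := Real.sqrt_pos.2 (by exact_mod_cast hn)
  have hdR : (0:ℝ) < d := by exact_mod_cast hd
  have hM₁d : 0 ≤ M₁ / Real.sqrt n := le_trans (abs_nonneg _) (hf ⟨0, hd⟩)
  have hM₂d : 0 ≤ M₂ / Real.sqrt n := le_trans (abs_nonneg _) (hT ⟨0, hd⟩)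
  have hM₁ : 0 ≤ M₁ := by
    have : M₁ = (M₁ / Real.sqrt n) * Real.sqrt n := (div_mul_cancel₀ _ hsq.ne').symm
    rw [this]; positivity
  have hM₂ : 0 ≤ M₂ := by
    have : M₂ = (M₂ / Real.sqrt n) * Real.sqrt n := (div_mul_cancel₀ _ hsq.ne').symm
    rw [this]; positivity
  set Δ : Fin d → ℝ := γh - γb with hΔ
  have hβ : ∀ i ∈ Finset.range n, |x i ⬝ᵥ (γh - γb)| ≤ (d:ℝ) * R := by
    intro i hi
    calc |x i ⬝ᵥ (γh - γb)| ≤ d * (‖x i‖ * ‖γh - γb‖) := abs_dot_le _ _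
      _ ≤ d * (R * 1) := by
          refine mul_le_mul_of_nonneg_left ?_ (Nat.cast_nonneg d)
          exact mul_le_mul (hxR i (Finset.mem_range.1 hi)) hδ (norm_nonneg _)
            (le_trans zero_le_one hR1)
      _ = d * R := by ring
  have hmvt := mvt_bound n x γh γb _ heq ((d:ℝ)*R) hβ
  set H : Fin d → Fin d → ℝ :=
    fun k l => (n:ℝ)⁻¹ * ∑ i ∈ Finset.range n, x i k * x i l * Real.exp (x i ⬝ᵥ γb)
    with hHdef
  have hQ : (n:ℝ)⁻¹ * ∑ i ∈ Finset.range n, Real.exp (x i ⬝ᵥ γb) * (x i ⬝ᵥ (γh-γb))^2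
      = ∑ k, ∑ l, Δ k * Δ l * H k l := quad_expand n _ x Δ
  have herr : |∑ k, ∑ l, Δ k * Δ l * (H k l - J k l)| ≤ (lam/2) * ‖Δ‖^2 := by
    have hterm : ∀ k l : Fin d, |Δ k * Δ l * (H k l - J k l)|
        ≤ ‖Δ‖ * ‖Δ‖ * (lam / (2 * d^2)) := by
      intro k l
      rw [abs_mul, abs_mul]
      have h1 : |Δ k| ≤ ‖Δ‖ := norm_le_pi_norm Δ k
      have h2 : |Δ l| ≤ ‖Δ‖ := norm_le_pi_norm Δ l
      have h3 : |H k l - J k l| ≤ lam / (2 * d^2) := hH k l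
      have hpos : (0:ℝ) ≤ lam / (2 * d^2) := by positivity
      exact mul_le_mul (mul_le_mul h1 h2 (abs_nonneg _) (norm_nonneg _)) h3
        (abs_nonneg _) (by positivity)
    calc |∑ k, ∑ l, Δ k * Δ l * (H k l - J k l)|
        ≤ ∑ k, |∑ l, Δ k * Δ l * (H k l - J k l)| := Finset.abs_sum_le_sum_abs _ _
      _ ≤ ∑ k : Fin d, ∑ l : Fin d, |Δ k * Δ l * (H k l - J k l)| :=
          Finset.sum_le_sum fun k _ => Finset.abs_sum_le_sum_abs _ _
      _ ≤ ∑ _k : Fin d, ∑ _l : Fin d, ‖Δ‖ * ‖Δ‖ * (lam / (2 * d^2)) :=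
          Finset.sum_le_sum fun k _ => Finset.sum_le_sum fun l _ => hterm k l
      _ = (d:ℝ) * ((d:ℝ) * (‖Δ‖ * ‖Δ‖ * (lam / (2 * d^2)))) := by
          simp [Finset.sum_const, mul_comm, mul_assoc]
      _ = (lam/2) * ‖Δ‖^2 := by field_simp
  have hQlow : (lam/2) * ‖Δ‖^2 ≤ ∑ k, ∑ l, Δ k * Δ l * H k l := by
    have hsplit : ∑ k, ∑ l, Δ k * Δ l * H k l
        = (∑ k, ∑ l, Δ k * Δ l * J k l) + ∑ k, ∑ l, Δ k * Δ l * (H k l - J k l) := by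
      rw [← Finset.sum_add_distrib]
      refine Finset.sum_congr rfl fun k _ => ?_
      rw [← Finset.sum_add_distrib]
      exact Finset.sum_congr rfl fun l _ => by ring
    have h1 := hlamQ Δ
    have h2 := neg_abs_le (∑ k, ∑ l, Δ k * Δ l * (H k l - J k l))
    rw [hsplit]
    linarith [herr]
  set T : Fin d → ℝ := (N:ℝ)⁻¹ • ∑ j ∈ Finset.range N, y j with hT'
  set f : Fin d → ℝ :=
    (n:ℝ)⁻¹ • ∑ i ∈ Finset.range n, Real.exp (x i ⬝ᵥ γb) • x i with hf'
  have hcomb : Real.exp (-((d:ℝ)*R)) * ((lam/2) * ‖Δ‖^2) ≤ Δ ⬝ᵥ (T - f) := by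
    refine le_trans ?_ hmvt
    refine mul_le_mul_of_nonneg_left ?_ (Real.exp_pos _).le
    rw [hQ]; exact hQlow
  have hTf : ‖T - f‖ ≤ (M₁+M₂)/Real.sqrt n := by
    have hco : ∀ k, |(T - f) k| ≤ (M₁+M₂)/Real.sqrt n := by
      intro k
      have hTk : T k = (N:ℝ)⁻¹ * ∑ j ∈ Finset.range N, y j k := by
        rw [hT']; simp [Finset.sum_apply]
      have hfk : f k = (n:ℝ)⁻¹ * ∑ i ∈ Finset.range n, Real.exp (x i ⬝ᵥ γb) * x i k := by
        rw [hf']; simp [Finset.sum_apply]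
      calc |(T-f) k| = |(T k - m k) - (f k - m k)| := by rw [Pi.sub_apply]; ring_nf
        _ ≤ |T k - m k| + |f k - m k| := abs_sub _ _
        _ ≤ M₂/Real.sqrt n + M₁/Real.sqrt n := by
            refine add_le_add ?_ ?_
            · rw [hTk]; exact hT k
            · rw [hfk]; exact hf k
        _ = (M₁+M₂)/Real.sqrt n := by ring
    refine (pi_norm_le_iff_of_nonneg (by positivity)).2 fun k => ?_
    rw [Real.norm_eq_abs]; exact hco k
  have hfinal : Real.exp (-((d:ℝ)*R)) * ((lam/2) * ‖Δ‖^2)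
      ≤ d * (‖Δ‖ * ((M₁+M₂)/Real.sqrt n)) := by
    calc Real.exp (-((d:ℝ)*R)) * ((lam/2) * ‖Δ‖^2) ≤ Δ ⬝ᵥ (T - f) := hcomb
      _ ≤ |Δ ⬝ᵥ (T - f)| := le_abs_self _
      _ ≤ d * (‖Δ‖ * ‖T - f‖) := abs_dot_le _ _
      _ ≤ d * (‖Δ‖ * ((M₁+M₂)/Real.sqrt n)) := by
          refine mul_le_mul_of_nonneg_left ?_ (Nat.cast_nonneg d)
          exact mul_le_mul_of_nonneg_left hTf (norm_nonneg _)
  have hc₀ : (0:ℝ) < Real.exp (-((d:ℝ)*R)) * (lam/2) := by positivity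
  rcases (norm_nonneg Δ).eq_or_lt with h0 | h0
  · rw [← h0, mul_zero]
    positivity
  · have h1 : (Real.exp (-((d:ℝ)*R)) * (lam/2)) * ‖Δ‖ ≤ d * ((M₁+M₂)/Real.sqrt n) := by
      nlinarith [hfinal, h0]
    rw [le_div_iff₀ hc₀]
    have h2 := mul_le_mul_of_nonneg_right h1 hsq.le
    calc Real.sqrt n * ‖Δ‖ * (Real.exp (-((d:ℝ)*R)) * (lam/2))
        = (Real.exp (-((d:ℝ)*R)) * (lam/2)) * ‖Δ‖ * Real.sqrt n := by ring
      _ ≤ d * ((M₁+M₂)/Real.sqrt n) * Real.sqrt n := h2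
      _ = d * (M₁+M₂) := by field_simp

set_option maxHeartbeats 2000000 in
/-- **Lemma B3 (propensity-score half): `√n`-rate of the covariate-balancing estimator.**
Let `(X_i^S) ~ μS` and `(X_i^T) ~ μT` be mutually independent i.i.d. families with compact
supports, `n/N_n` bounded, `γ̄` the population solution of `E_S[X exp(Xᵀγ̄)] = E_T[X]` with
`J = E_S[XXᵀ exp(Xᵀγ̄)]` invertible.  If `γ̂_n` solves the empirical covariate-balancing
equation a.s. and is consistent for `γ̄`, then `γ̂_n − γ̄ = O_p(n^{−1/2})`. -/
theorem covariate_balancing_root_n_rate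
    (d : ℕ) (Ω : Type) [MeasurableSpace Ω] (P : Measure Ω) [IsProbabilityMeasure P]
    (μS μT : Measure (Fin d → ℝ)) [IsProbabilityMeasure μS] [IsProbabilityMeasure μT]
    (KS KT : Set (Fin d → ℝ)) (hKS : IsCompact KS) (hKT : IsCompact KT)
    (hμSK : μS KSᶜ = 0) (hμTK : μT KTᶜ = 0)
    (XS XT : ℕ → Ω → (Fin d → ℝ))
    (hXSm : ∀ i, Measurable (XS i)) (hXTm : ∀ j, Measurable (XT j))
    (hXS_law : ∀ i, P.map (XS i) = μS) (hXT_law : ∀ j, P.map (XT j) = μT)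
    -- the two families are i.i.d. and mutually independent
    (hIndep : iIndepFun
      (fun s => Sum.elim XS XT s) P)
    (Nn : ℕ → ℕ) (hNpos : ∀ n, 0 < Nn n)
    (hNbd : ∃ C : ℝ, ∀ n : ℕ, (n : ℝ) ≤ C * (Nn n : ℝ))
    (γbar : Fin d → ℝ)
    (hpop : ∫ x, Real.exp (x ⬝ᵥ γbar) • x ∂μS = ∫ x, x ∂μT)
    (J : Matrix (Fin d) (Fin d) ℝ)
    (hJ : J = Matrix.of (fun i j => ∫ x, x i * x j * Real.exp (x ⬝ᵥ γbar) ∂μS))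
    (hJunit : IsUnit J.det)
    (γhat : ℕ → Ω → (Fin d → ℝ)) (hγm : ∀ n, Measurable (γhat n))
    (hee : ∀ n : ℕ, 0 < n → ∀ᵐ ω ∂P,
      (n : ℝ)⁻¹ • ∑ i ∈ Finset.range n, Real.exp ((XS i ω) ⬝ᵥ (γhat n ω)) • XS i ω
        = ((Nn n : ℝ))⁻¹ • ∑ j ∈ Finset.range (Nn n), XT j ω)
    (hconsistent : TendstoInMeasure P γhat atTop (fun _ => γbar)) :
    BoundedInProb P (fun n ω => Real.sqrt n • (γhat n ω - γbar)) := by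
  intro ε hε
  rcases Nat.eq_zero_or_pos d with hd0 | hd
  · subst hd0
    refine ⟨1, one_pos, ?_⟩
    filter_upwards with n
    have hz : ∀ ω : Ω, γhat n ω - γbar = 0 := fun ω => Subsingleton.elim _ _
    have h0 : ∀ v : Fin 0 → ℝ, ‖v‖ = 0 := fun v => by
      rw [Subsingleton.elim v 0, norm_zero]
    have : {ω : Ω | (1:ℝ) < ‖Real.sqrt n • (γhat n ω - γbar)‖} = ∅ := by
      ext ω
      simp [hz ω, h0]
    rw [this]
    simpa using hε
  -- d > 0 case
  obtain ⟨C, hC⟩ := hNbd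
  have hCpos : 0 < C := by
    have h1 : (1:ℝ) ≤ C * (Nn 1 : ℝ) := by exact_mod_cast hC 1
    have h2 : (1:ℝ) ≤ (Nn 1 : ℝ) := by exact_mod_cast hNpos 1
    nlinarith
  obtain ⟨RS, hRS⟩ := hKS.isBounded.subset_closedBall (0 : Fin d → ℝ)
  obtain ⟨RT, hRT⟩ := hKT.isBounded.subset_closedBall (0 : Fin d → ℝ)
  set R : ℝ := max 1 (max RS RT) with hRdef
  have hR1 : (1:ℝ) ≤ R := le_max_left _ _
  have hR0 : (0:ℝ) < R := lt_of_lt_of_le one_pos hR1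
  have hRS' : ∀ x ∈ KS, ‖x‖ ≤ R := by
    intro x hx
    have hh := hRS hx
    rw [Metric.mem_closedBall, dist_zero_right] at hh
    exact hh.trans ((le_max_left RS RT).trans (le_max_right _ _))
  have hRT' : ∀ x ∈ KT, ‖x‖ ≤ R := by
    intro x hx
    have hh := hRT hx
    rw [Metric.mem_closedBall, dist_zero_right] at hh
    exact hh.trans ((le_max_right RS RT).trans (le_max_right _ _))
  have hKSme : MeasurableSet KS := hKS.isClosed.measurableSet
  have hKTme : MeasurableSet KT := hKT.isClosed.measurableSet
  have haeS : ∀ i, ∀ᵐ ω ∂P, XS i ω ∈ KS := by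
    intro i
    rw [ae_iff]
    have h1 : {ω | ¬ XS i ω ∈ KS} = XS i ⁻¹' KSᶜ := rfl
    rw [h1, ← Measure.map_apply (hXSm i) hKSme.compl, hXS_law i]
    exact hμSK
  have haeT : ∀ j, ∀ᵐ ω ∂P, XT j ω ∈ KT := by
    intro j
    rw [ae_iff]
    have h1 : {ω | ¬ XT j ω ∈ KT} = XT j ⁻¹' KTᶜ := rfl
    rw [h1, ← Measure.map_apply (hXTm j) hKTme.compl, hXT_law j]
    exact hμTK
  have hcd : ∀ w : Fin d → ℝ, Continuous fun x : Fin d → ℝ => x ⬝ᵥ w := fun w => by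
    simp only [dotProduct]; fun_prop
  have hce : Continuous fun x : Fin d → ℝ => Real.exp (x ⬝ᵥ γbar) :=
    Real.continuous_exp.comp (hcd γbar)
  have hcH : ∀ k l : Fin d,
      Continuous fun x : Fin d → ℝ => x k * x l * Real.exp (x ⬝ᵥ γbar) :=
    fun k l => ((continuous_apply k).mul (continuous_apply l)).mul hce
  have hcf : ∀ k : Fin d, Continuous fun x : Fin d → ℝ => Real.exp (x ⬝ᵥ γbar) * x k :=
    fun k => hce.mul (continuous_apply k)
  obtain ⟨lam, hlam, hlamQ⟩ := exists_min_eig hd μS KS hKS hμSK γbar J hJ hJunit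
  have hintPop : Integrable (fun x : Fin d → ℝ => Real.exp (x ⬝ᵥ γbar) • x) μS :=
    integrable_of_compact_ae μS KS hKS hμSK _ (hce.smul continuous_id)
  have hintT : Integrable (fun x : Fin d → ℝ => x) μT :=
    integrable_of_compact_ae μT KT hKT hμTK _ continuous_id
  set m : Fin d → ℝ := ∫ x, x ∂μT with hm
  have hmk : ∀ k, ∫ x, x k ∂μT = m k := fun k =>
    (ContinuousLinearMap.proj k : (Fin d → ℝ) →L[ℝ] ℝ).integral_comp_comm hintT
  have hmSk : ∀ k, ∫ x, Real.exp (x ⬝ᵥ γbar) * x k ∂μS = m k := by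
    intro k
    have h1 := (ContinuousLinearMap.proj k : (Fin d → ℝ) →L[ℝ] ℝ).integral_comp_comm hintPop
    calc ∫ x, Real.exp (x ⬝ᵥ γbar) * x k ∂μS
        = (∫ x, Real.exp (x ⬝ᵥ γbar) • x ∂μS) k := h1
      _ = (∫ x, x ∂μT) k := by rw [hpop]
      _ = m k := rfl
  set Eb : ℝ := Real.exp ((d:ℝ) * (R * ‖γbar‖)) with hEbdef
  have hEb0 : (0:ℝ) < Eb := Real.exp_pos _
  have hexpbd : ∀ x ∈ KS, Real.exp (x ⬝ᵥ γbar) ≤ Eb := by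
    intro x hx
    apply Real.exp_le_exp.2
    calc x ⬝ᵥ γbar ≤ |x ⬝ᵥ γbar| := le_abs_self _
      _ ≤ (d:ℝ) * (‖x‖ * ‖γbar‖) := abs_dot_le _ _
      _ ≤ (d:ℝ) * (R * ‖γbar‖) := by
          refine mul_le_mul_of_nonneg_left ?_ (Nat.cast_nonneg d)
          exact mul_le_mul_of_nonneg_right (hRS' x hx) (norm_nonneg _)
  have hbdH : ∀ (k l : Fin d), ∀ x ∈ KS,
      |x k * x l * Real.exp (x ⬝ᵥ γbar)| ≤ R * R * Eb := by
    intro k l x hx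
    rw [abs_mul, abs_mul]
    have h1 : |x k| ≤ R := le_trans (norm_le_pi_norm x k) (hRS' x hx)
    have h2 : |x l| ≤ R := le_trans (norm_le_pi_norm x l) (hRS' x hx)
    have h3 : |Real.exp (x ⬝ᵥ γbar)| ≤ Eb := by
      rw [abs_of_pos (Real.exp_pos _)]; exact hexpbd x hx
    exact mul_le_mul (mul_le_mul h1 h2 (abs_nonneg _) hR0.le) h3 (abs_nonneg _)
      (by positivity)
  have hbdf : ∀ (k : Fin d), ∀ x ∈ KS,
      |Real.exp (x ⬝ᵥ γbar) * x k| ≤ Eb * R := by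
    intro k x hx
    rw [abs_mul]
    have h1 : |x k| ≤ R := le_trans (norm_le_pi_norm x k) (hRS' x hx)
    have h3 : |Real.exp (x ⬝ᵥ γbar)| ≤ Eb := by
      rw [abs_of_pos (Real.exp_pos _)]; exact hexpbd x hx
    exact mul_le_mul h3 h1 (abs_nonneg _) hEb0.le
  have hbdT : ∀ (k : Fin d), ∀ x ∈ KT, |x k| ≤ R :=
    fun k x hx => le_trans (norm_le_pi_norm x k) (hRT' x hx)
  have hExpS : ∀ (φ : (Fin d → ℝ) → ℝ), Continuous φ → ∀ i : ℕ,
      ∫ ω, φ (XS i ω) ∂P = ∫ x, φ x ∂μS := by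
    intro φ hφ i
    rw [← hXS_law i, integral_map (hXSm i).aemeasurable hφ.aestronglyMeasurable]
  have hExpT : ∀ (φ : (Fin d → ℝ) → ℝ), Continuous φ → ∀ j : ℕ,
      ∫ ω, φ (XT j ω) ∂P = ∫ x, φ x ∂μT := by
    intro φ hφ j
    rw [← hXT_law j, integral_map (hXTm j).aemeasurable hφ.aestronglyMeasurable]
  have hIndSf : ∀ (φ : (Fin d → ℝ) → ℝ), Measurable φ → ∀ i j : ℕ, i ≠ j →
      IndepFun (fun ω => φ (XS i ω)) (fun ω => φ (XS j ω)) P := by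
    intro φ hφ i j hij
    have h1 : IndepFun (XS i) (XS j) P :=
      hIndep.indepFun (show (Sum.inl i : ℕ ⊕ ℕ) ≠ Sum.inl j by simpa using hij)
    exact h1.comp hφ hφ
  have hIndTf : ∀ (φ : (Fin d → ℝ) → ℝ), Measurable φ → ∀ i j : ℕ, i ≠ j →
      IndepFun (fun ω => φ (XT i ω)) (fun ω => φ (XT j ω)) P := by
    intro φ hφ i j hij
    have h1 : IndepFun (XT i) (XT j) P :=
      hIndep.indepFun (show (Sum.inr i : ℕ ⊕ ℕ) ≠ Sum.inr j by simpa using hij)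
    exact h1.comp hφ hφ
  set a4 : ℝ := lam / (2*(d:ℝ)^2) with ha4def
  have hdR : (0:ℝ) < d := by exact_mod_cast hd
  have ha4 : 0 < a4 := by rw [ha4def]; positivity
  have hd8 : (d:ℝ) * (ε/(8*(d:ℝ))) = ε/8 := by
    rw [mul_comm, div_mul_eq_mul_div, mul_comm (8:ℝ) (d:ℝ), ← div_div,
      mul_div_assoc, div_self hdR.ne', mul_one]
  have chebH : ∀ (k l : Fin d) (n : ℕ), 0 < n →
      P {ω | a4 ≤ |(n:ℝ)⁻¹ * ∑ i ∈ Finset.range n,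
          (XS i ω k * XS i ω l * Real.exp (XS i ω ⬝ᵥ γbar)) - J k l|}
        ≤ ENNReal.ofReal ((R*R*Eb)^2 / (n * a4^2)) := by
    intro k l n hn
    refine cheb_mean P (fun i ω => XS i ω k * XS i ω l * Real.exp (XS i ω ⬝ᵥ γbar))
      (R*R*Eb) (fun i => ((hcH k l).measurable).comp (hXSm i)) ?_ (J k l) ?_
      (fun i j hij => hIndSf _ (hcH k l).measurable i j hij) n hn ha4
    · intro i; filter_upwards [haeS i] with ω hω using hbdH k l _ hω
    · intro i
      rw [hExpS _ (hcH k l) i, hJ]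
      rfl
  have chebf : ∀ (k : Fin d) (n : ℕ), 0 < n → ∀ a : ℝ, 0 < a →
      P {ω | a ≤ |(n:ℝ)⁻¹ * ∑ i ∈ Finset.range n,
          (Real.exp (XS i ω ⬝ᵥ γbar) * XS i ω k) - m k|}
        ≤ ENNReal.ofReal ((Eb*R)^2 / (n * a^2)) := by
    intro k n hn a ha
    refine cheb_mean P (fun i ω => Real.exp (XS i ω ⬝ᵥ γbar) * XS i ω k)
      (Eb*R) (fun i => ((hcf k).measurable).comp (hXSm i)) ?_ (m k) ?_
      (fun i j hij => hIndSf _ (hcf k).measurable i j hij) n hn ha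
    · intro i; filter_upwards [haeS i] with ω hω using hbdf k _ hω
    · intro i
      rw [hExpS _ (hcf k) i]
      exact hmSk k
  have chebT : ∀ (k : Fin d) (N : ℕ), 0 < N → ∀ a : ℝ, 0 < a →
      P {ω | a ≤ |(N:ℝ)⁻¹ * ∑ j ∈ Finset.range N, XT j ω k - m k|}
        ≤ ENNReal.ofReal (R^2 / (N * a^2)) := by
    intro k N hN a ha
    refine cheb_mean P (fun j ω => XT j ω k)
      (R) (fun j => (measurable_pi_apply k).comp (hXTm j)) ?_ (m k) ?_
      (fun i j hij => hIndTf (fun x => x k) (measurable_pi_apply k) i j hij) N hN ha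
    · intro j; filter_upwards [haeT j] with ω hω using hbdT k _ hω
    · intro j
      rw [hExpT _ (continuous_apply k) j]
      exact hmk k
  set M₁ : ℝ := Real.sqrt (8 * d * (Eb*R)^2 / ε) + 1 with hM₁def
  have hM₁0 : 0 < M₁ := by rw [hM₁def]; positivity
  have hM₁b : (Eb*R)^2 / M₁^2 ≤ ε / (8*d) := by
    have hkey : 8 * d * (Eb*R)^2 / ε < M₁^2 := by
      have h := Real.sq_sqrt (show (0:ℝ) ≤ 8*d*(Eb*R)^2/ε by positivity)
      have h2 := Real.sqrt_nonneg (8*d*(Eb*R)^2/ε)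
      rw [hM₁def]
      nlinarith
    rw [div_le_div_iff₀ (by positivity) (by positivity)]
    have h3 := (div_lt_iff₀ hε).1 hkey
    nlinarith
  set M₂ : ℝ := Real.sqrt (8 * d * (C * R^2) / ε) + 1 with hM₂def
  have hM₂0 : 0 < M₂ := by rw [hM₂def]; positivity
  have hM₂b : C * R^2 / M₂^2 ≤ ε / (8*d) := by
    have hkey : 8 * d * (C * R^2) / ε < M₂^2 := by
      have h := Real.sq_sqrt (show (0:ℝ) ≤ 8*d*(C*R^2)/ε by positivity)
      have h2 := Real.sqrt_nonneg (8*d*(C*R^2)/ε)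
      rw [hM₂def]
      nlinarith
    rw [div_le_div_iff₀ (by positivity) (by positivity)]
    have h3 := (div_lt_iff₀ hε).1 hkey
    nlinarith
  set M₀ : ℝ := (d:ℝ) * (M₁ + M₂) / (Real.exp (-((d:ℝ) * R)) * (lam / 2)) with hM₀def
  have hM₀0 : 0 ≤ M₀ := by rw [hM₀def]; positivity
  refine ⟨M₀ + 1, by positivity, ?_⟩
  have hev1 : ∀ᶠ n : ℕ in atTop,
      P {ω | 1 ≤ dist (γhat n ω) γbar} < ENNReal.ofReal (ε/8) := by
    have h := hconsistent 1 one_pos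
    have hset : ∀ n, {ω | 1 ≤ dist (γhat n ω) γbar}
        = {ω | (1:ENNReal) ≤ edist (γhat n ω) γbar} := by
      intro n; ext ω
      simp only [Set.mem_setOf_eq, edist_dist, ENNReal.one_le_ofReal]
    simp_rw [hset]
    exact h.eventually_lt_const (ENNReal.ofReal_pos.2 (by linarith))
  have hev2 : ∀ᶠ n : ℕ in atTop, (d:ℝ)^2 * ((R*R*Eb)^2 / (n * a4^2)) < ε/8 := by
    have h1 : Tendsto (fun n : ℕ => (n:ℝ) * a4^2) atTop atTop :=
      tendsto_natCast_atTop_atTop.atTop_mul_const (by positivity)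
    have h2 : Tendsto (fun n : ℕ => (R*R*Eb)^2 / ((n:ℝ) * a4^2)) atTop (nhds 0) :=
      tendsto_const_nhds.div_atTop h1
    have h3 := h2.const_mul ((d:ℝ)^2)
    rw [mul_zero] at h3
    exact h3.eventually_lt_const (by linarith)
  filter_upwards [hev1, hev2, eventually_ge_atTop 1] with n hn1 hn2 hn3
  have hnpos : 0 < n := hn3
  have hNnpos : 0 < Nn n := hNpos n
  have hsqn : 0 < Real.sqrt n := Real.sqrt_pos.2 (by exact_mod_cast hnpos)
  -- bad events
  set S1 : Set Ω := {ω | ¬ ((n:ℝ)⁻¹ • ∑ i ∈ Finset.range n,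
      Real.exp ((XS i ω) ⬝ᵥ (γhat n ω)) • XS i ω
    = ((Nn n : ℝ))⁻¹ • ∑ j ∈ Finset.range (Nn n), XT j ω)} with hS1def
  have hS1 : P S1 = 0 := by
    have h := hee n hnpos
    rw [ae_iff] at h
    exact h
  set S2a : Set Ω := {ω | ¬ ∀ i, i < n → XS i ω ∈ KS} with hS2adef
  have hS2a : P S2a = 0 := by
    have h : ∀ᵐ ω ∂P, ∀ i, i < n → XS i ω ∈ KS := by
      rw [ae_all_iff]
      intro i
      filter_upwards [haeS i] with ω h _ using h
    rw [ae_iff] at h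
    exact h
  set S2b : Set Ω := {ω | ¬ ∀ j, j < Nn n → XT j ω ∈ KT} with hS2bdef
  have hS2b : P S2b = 0 := by
    have h : ∀ᵐ ω ∂P, ∀ j, j < Nn n → XT j ω ∈ KT := by
      rw [ae_all_iff]
      intro j
      filter_upwards [haeT j] with ω h _ using h
    rw [ae_iff] at h
    exact h
  set S3 : Set Ω := {ω | 1 ≤ dist (γhat n ω) γbar} with hS3def
  set S4 : Set Ω := ⋃ k ∈ (Finset.univ : Finset (Fin d)),
    ⋃ l ∈ (Finset.univ : Finset (Fin d)),
      {ω | a4 ≤ |(n:ℝ)⁻¹ * ∑ i ∈ Finset.range n,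
        (XS i ω k * XS i ω l * Real.exp (XS i ω ⬝ᵥ γbar)) - J k l|} with hS4def
  set S5 : Set Ω := ⋃ k ∈ (Finset.univ : Finset (Fin d)),
      {ω | M₁ / Real.sqrt n ≤ |(n:ℝ)⁻¹ * ∑ i ∈ Finset.range n,
        (Real.exp (XS i ω ⬝ᵥ γbar) * XS i ω k) - m k|} with hS5def
  set S6 : Set Ω := ⋃ k ∈ (Finset.univ : Finset (Fin d)),
      {ω | M₂ / Real.sqrt n ≤ |((Nn n : ℝ))⁻¹ * ∑ j ∈ Finset.range (Nn n),
        XT j ω k - m k|} with hS6def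
  -- inclusion into the union of bad events
  have hincl : {ω | M₀ + 1 < ‖Real.sqrt n • (γhat n ω - γbar)‖}
      ⊆ S1 ∪ S2a ∪ S2b ∪ S3 ∪ S4 ∪ S5 ∪ S6 := by
    intro ω hω
    by_contra hnot
    simp only [Set.mem_union, not_or] at hnot
    obtain ⟨⟨⟨⟨⟨⟨h1, h2a⟩, h2b⟩, h3⟩, h4⟩, h5⟩, h6⟩ := hnot
    have heq := not_not.1 h1
    have hxR : ∀ i, i < n → ‖XS i ω‖ ≤ R := fun i hi => hRS' _ ((not_not.1 h2a) i hi)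
    have hδ : ‖γhat n ω - γbar‖ ≤ 1 := by
      simp only [hS3def, Set.mem_setOf_eq] at h3
      have := lt_of_not_ge h3
      rw [dist_eq_norm] at this
      exact this.le
    have hH4 : ∀ k l : Fin d,
        |(n:ℝ)⁻¹ * (∑ i ∈ Finset.range n,
          XS i ω k * XS i ω l * Real.exp (XS i ω ⬝ᵥ γbar)) - J k l| ≤ lam / (2*(d:ℝ)^2) := by
      intro k l
      rw [← ha4def]
      by_contra hcon
      apply h4
      rw [hS4def]
      simp only [Set.mem_iUnion, Finset.mem_univ, Set.mem_setOf_eq]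
      exact ⟨k, trivial, l, trivial, (lt_of_not_ge hcon).le⟩
    have hf5 : ∀ k : Fin d,
        |(n:ℝ)⁻¹ * (∑ i ∈ Finset.range n,
          Real.exp (XS i ω ⬝ᵥ γbar) * XS i ω k) - m k| ≤ M₁ / Real.sqrt n := by
      intro k
      by_contra hcon
      apply h5
      rw [hS5def]
      simp only [Set.mem_iUnion, Finset.mem_univ, Set.mem_setOf_eq]
      exact ⟨k, trivial, (lt_of_not_ge hcon).le⟩
    have hT6 : ∀ k : Fin d,
        |((Nn n : ℝ))⁻¹ * (∑ j ∈ Finset.range (Nn n), XT j ω k) - m k|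
          ≤ M₂ / Real.sqrt n := by
      intro k
      by_contra hcon
      apply h6
      rw [hS6def]
      simp only [Set.mem_iUnion, Finset.mem_univ, Set.mem_setOf_eq]
      exact ⟨k, trivial, (lt_of_not_ge hcon).le⟩
    have hb := pointwise_bound hd n (Nn n) hnpos (fun i => XS i ω) (fun j => XT j ω)
      (γhat n ω) γbar m J lam hlam hlamQ R hR1 hxR heq hδ hH4 M₁ M₂ hf5 hT6
    rw [← hM₀def] at hb
    have hnorm : ‖Real.sqrt n • (γhat n ω - γbar)‖
        = Real.sqrt n * ‖γhat n ω - γbar‖ := by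
      rw [norm_smul, Real.norm_eq_abs, abs_of_nonneg (Real.sqrt_nonneg _)]
    rw [Set.mem_setOf_eq, hnorm] at hω
    linarith
  -- measure bounds for the bad events
  have hP3 : P S3 ≤ ENNReal.ofReal (ε/8) := le_of_lt hn1
  have hP4 : P S4 ≤ ENNReal.ofReal (ε/8) := by
    rw [hS4def]
    refine (measure_biUnion_finset_le _ _).trans ?_
    refine (Finset.sum_le_sum fun k (_ : k ∈ Finset.univ) =>
      measure_biUnion_finset_le _ _).trans ?_
    refine (Finset.sum_le_sum fun k (_ : k ∈ Finset.univ) =>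
      Finset.sum_le_sum fun l (_ : l ∈ Finset.univ) => chebH k l n hnpos).trans ?_
    rw [Finset.sum_const, Finset.sum_const, Finset.card_univ, Fintype.card_fin,
      smul_smul, nsmul_eq_mul]
    have hc : ((d*d : ℕ) : ENNReal) = ENNReal.ofReal ((d:ℝ)*(d:ℝ)) := by
      rw [← ENNReal.ofReal_natCast]
      push_cast
      ring_nf
    rw [hc, ← ENNReal.ofReal_mul (by positivity)]
    apply ENNReal.ofReal_le_ofReal
    have hrw : (d:ℝ)*(d:ℝ) * ((R*R*Eb)^2 / (n * a4^2))
        = (d:ℝ)^2 * ((R*R*Eb)^2 / (n * a4^2)) := by ring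
    rw [hrw]
    exact hn2.le
  have hP5 : P S5 ≤ ENNReal.ofReal (ε/8) := by
    have hstep : ∀ k : Fin d,
        P {ω | M₁ / Real.sqrt n ≤ |(n:ℝ)⁻¹ * ∑ i ∈ Finset.range n,
          (Real.exp (XS i ω ⬝ᵥ γbar) * XS i ω k) - m k|}
        ≤ ENNReal.ofReal (ε/(8*d)) := by
      intro k
      refine (chebf k n hnpos (M₁ / Real.sqrt n) (by positivity)).trans ?_
      apply ENNReal.ofReal_le_ofReal
      have hkey : (n:ℝ) * (M₁ / Real.sqrt n)^2 = M₁^2 := by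
        rw [div_pow, Real.sq_sqrt (by positivity : (0:ℝ) ≤ (n:ℝ))]
        field_simp
      rw [hkey]
      exact hM₁b
    rw [hS5def]
    refine (measure_biUnion_finset_le _ _).trans ?_
    refine (Finset.sum_le_sum fun k (_ : k ∈ Finset.univ) => hstep k).trans ?_
    rw [Finset.sum_const, Finset.card_univ, Fintype.card_fin, nsmul_eq_mul]
    rw [show ((d:ℕ):ENNReal) = ENNReal.ofReal (d:ℝ) from (ENNReal.ofReal_natCast d).symm]
    rw [← ENNReal.ofReal_mul (by positivity)]
    apply ENNReal.ofReal_le_ofReal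
    rw [hd8]
  have hP6 : P S6 ≤ ENNReal.ofReal (ε/8) := by
    have hstep : ∀ k : Fin d,
        P {ω | M₂ / Real.sqrt n ≤ |((Nn n : ℝ))⁻¹ * ∑ j ∈ Finset.range (Nn n),
          XT j ω k - m k|}
        ≤ ENNReal.ofReal (ε/(8*d)) := by
      intro k
      refine (chebT k (Nn n) hNnpos (M₂ / Real.sqrt n) (by positivity)).trans ?_
      apply ENNReal.ofReal_le_ofReal
      have hNc : (0:ℝ) < (Nn n : ℝ) := by exact_mod_cast hNnpos
      have hkey : ((Nn n : ℝ)) * (M₂ / Real.sqrt n)^2 = (Nn n : ℝ) * M₂^2 / n := by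
        rw [div_pow, Real.sq_sqrt (by positivity : (0:ℝ) ≤ (n:ℝ))]
        ring
      rw [hkey, div_div_eq_mul_div]
      calc R^2 * n / ((Nn n : ℝ) * M₂^2)
          ≤ R^2 * (C * (Nn n : ℝ)) / ((Nn n : ℝ) * M₂^2) := by
            gcongr
            exact hC n
        _ = C * R^2 / M₂^2 := by field_simp
        _ ≤ ε/(8*d) := hM₂b
    rw [hS6def]
    refine (measure_biUnion_finset_le _ _).trans ?_
    refine (Finset.sum_le_sum fun k (_ : k ∈ Finset.univ) => hstep k).trans ?_
    rw [Finset.sum_const, Finset.card_univ, Fintype.card_fin, nsmul_eq_mul]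
    rw [show ((d:ℕ):ENNReal) = ENNReal.ofReal (d:ℝ) from (ENNReal.ofReal_natCast d).symm]
    rw [← ENNReal.ofReal_mul (by positivity)]
    apply ENNReal.ofReal_le_ofReal
    rw [hd8]
  -- combine
  have htotal : P {ω | M₀ + 1 < ‖Real.sqrt n • (γhat n ω - γbar)‖}
      ≤ ENNReal.ofReal (ε/2) := by
    refine (measure_mono hincl).trans ?_
    have hsum : ENNReal.ofReal (ε/8) + ENNReal.ofReal (ε/8) + ENNReal.ofReal (ε/8)
        + ENNReal.ofReal (ε/8) = ENNReal.ofReal (ε/2) := by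
      rw [← ENNReal.ofReal_add (by linarith) (by linarith),
        ← ENNReal.ofReal_add (by linarith) (by linarith),
        ← ENNReal.ofReal_add (by linarith) (by linarith)]
      congr 1
      ring
    calc P (S1 ∪ S2a ∪ S2b ∪ S3 ∪ S4 ∪ S5 ∪ S6)
        ≤ P (S1 ∪ S2a ∪ S2b ∪ S3 ∪ S4 ∪ S5) + P S6 := measure_union_le _ _
      _ ≤ (P (S1 ∪ S2a ∪ S2b ∪ S3 ∪ S4) + P S5) + P S6 :=
          by gcongr; exact measure_union_le _ _
      _ ≤ ((P (S1 ∪ S2a ∪ S2b ∪ S3) + P S4) + P S5) + P S6 :=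
          by gcongr; exact measure_union_le _ _
      _ ≤ (((P (S1 ∪ S2a ∪ S2b) + P S3) + P S4) + P S5) + P S6 :=
          by gcongr; exact measure_union_le _ _
      _ ≤ ((((P (S1 ∪ S2a) + P S2b) + P S3) + P S4) + P S5) + P S6 :=
          by gcongr; exact measure_union_le _ _
      _ ≤ (((((P S1 + P S2a) + P S2b) + P S3) + P S4) + P S5) + P S6 :=
          by gcongr; exact measure_union_le _ _
      _ = ((P S3 + P S4) + P S5) + P S6 := by
          rw [hS1, hS2a, hS2b]
          simp
      _ ≤ ((ENNReal.ofReal (ε/8) + ENNReal.ofReal (ε/8)) + ENNReal.ofReal (ε/8))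
            + ENNReal.ofReal (ε/8) :=
          add_le_add (add_le_add (add_le_add hP3 hP4) hP5) hP6
      _ = ENNReal.ofReal (ε/2) := hsum
  have hfin := ENNReal.toReal_mono ENNReal.ofReal_ne_top htotal
  rw [ENNReal.toReal_ofReal (by linarith : (0:ℝ) ≤ ε/2)] at hfin
  linarith
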